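/- Let r, s ≥ 2 be multiplicatively independent integers and let A ⊆ ℕ₀ be infinite with Φ_s(A) ⊆ A. Then for every finite word w over the digits {0,…,r−1}, there exists an element of A whose base-r expansion begins with w (i.e., there exist d ∈ ℕ₀ and n₀ < r^d with (w)_r · r^d + n₀ ∈ A, where (w)_r is the integer with base-r digits w). -/

import Mathlib

/-- `(w)_r`: the integer whose base-`r` digits are the letters of the word `w`
(most significant digit first): `(w)_r = w₀ r^{ℓ-1} + ⋯ + w_{ℓ-1}`. -/
def wordVal (r : ℕ) (w : List ℕ) : ℕ := w.foldl (fun acc d => acc * r + d) 0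

/-- Stepping around the circle by a small nonzero step `β` reaches `[0, δ)`
within roughly `1/|β|` steps. -/
lemma step_lemma (β δ : ℝ) (hβ : β ≠ 0) (hδβ : |β| < δ) (x : ℝ) :
    ∃ j : ℕ, (j : ℝ) ≤ 1 / |β| + 1 ∧ Int.fract (x - j * β) < δ := by
  have hf0 := Int.fract_nonneg x
  have hf1 := Int.fract_lt_one x
  have habspos : 0 < |β| := abs_pos.mpr hβ
  by_cases hδ1 : 1 ≤ δ
  · refine ⟨0, by push_cast; positivity, by simpa using hf1.trans_le hδ1⟩
  push_neg at hδ1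
  have hx := Int.floor_add_fract x
  rcases hβ.lt_or_gt with hneg | hpos
  · -- β < 0 : move forward by σ = -β
    set σ : ℝ := -β with hσdef
    have hσ : 0 < σ := by simpa [hσdef] using hneg
    have habs : |β| = σ := abs_of_neg hneg
    set j : ℤ := ⌈(1 - Int.fract x) / σ⌉ with hjdef
    have hj1 : (1 : ℤ) ≤ j := by
      have : (0 : ℝ) < (1 - Int.fract x) / σ := div_pos (by linarith) hσ
      exact Int.ceil_pos.mpr this
    have hjn : (j.toNat : ℝ) = (j : ℝ) := by exact_mod_cast Int.toNat_of_nonneg (by linarith)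
    have hceil1 : ((1 : ℝ) - Int.fract x) / σ ≤ (j : ℝ) := Int.le_ceil _
    have hceil2 : (j : ℝ) < (1 - Int.fract x) / σ + 1 := Int.ceil_lt_add_one _
    have hc1 : 1 - Int.fract x ≤ (j : ℝ) * σ := by
      have := mul_le_mul_of_nonneg_right hceil1 hσ.le
      rwa [div_mul_cancel₀ _ hσ.ne'] at this
    have hc2 : (j : ℝ) * σ < 1 - Int.fract x + σ := by
      have := mul_lt_mul_of_pos_right hceil2 hσ
      rw [add_mul, div_mul_cancel₀ _ hσ.ne', one_mul] at this
      linarith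
    refine ⟨j.toNat, ?_, ?_⟩
    · have h2 : (1 - Int.fract x) / σ ≤ 1 / σ := by gcongr <;> linarith
      rw [hjn, habs]; linarith
    · have hval : x - (j.toNat : ℝ) * β = (⌊x⌋ : ℝ) + 1 + (Int.fract x + (j : ℝ) * σ - 1) := by
        rw [hjn]
        have hβσ : β = -σ := by rw [hσdef]; ring
        rw [hβσ]; linarith
      have hin : Int.fract x + (j : ℝ) * σ - 1 ∈ Set.Ico (0:ℝ) 1 := by
        constructor
        · linarith
        · have : σ < 1 := by rw [← habs]; linarith
          linarith
      rw [hval]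
      have : (⌊x⌋ : ℝ) + 1 + (Int.fract x + (j : ℝ) * σ - 1)
          = ((⌊x⌋ + 1 : ℤ) : ℝ) + (Int.fract x + (j : ℝ) * σ - 1) := by push_cast; try ring
      rw [this, Int.fract_intCast_add, Int.fract_eq_self.mpr ⟨hin.1, hin.2⟩]
      rw [habs] at hδβ
      linarith
  · -- β > 0 : move down within [0,1)
    have habs : |β| = β := abs_of_pos hpos
    set j : ℤ := ⌊Int.fract x / β⌋ with hjdef
    have hj0 : 0 ≤ j := Int.floor_nonneg.mpr (div_nonneg hf0 hpos.le)
    have hjn : (j.toNat : ℝ) = (j : ℝ) := by exact_mod_cast Int.toNat_of_nonneg hj0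
    have hfl1 : (j : ℝ) ≤ Int.fract x / β := Int.floor_le _
    have hfl2 : Int.fract x / β < (j : ℝ) + 1 := Int.lt_floor_add_one _
    have hc1 : (j : ℝ) * β ≤ Int.fract x := by
      have := mul_le_mul_of_nonneg_right hfl1 hpos.le
      rwa [div_mul_cancel₀ _ hpos.ne'] at this
    have hc2 : Int.fract x < (j : ℝ) * β + β := by
      have := mul_lt_mul_of_pos_right hfl2 hpos
      rw [add_mul, one_mul, div_mul_cancel₀ _ hpos.ne'] at this
      linarith
    refine ⟨j.toNat, ?_, ?_⟩
    · have h2 : Int.fract x / β ≤ 1 / β := by gcongr <;> linarith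
      rw [hjn, habs]; linarith
    · have hval : x - (j.toNat : ℝ) * β = (⌊x⌋ : ℝ) + (Int.fract x - (j : ℝ) * β) := by
        rw [hjn]; linarith
      have hβ1 : β < 1 := by rw [← habs]; linarith
      rw [hval, Int.fract_intCast_add,
        Int.fract_eq_self.mpr ⟨by linarith, by linarith⟩]
      rw [habs] at hδβ
      linarith

/-- Syndeticity of visits of the backward irrational rotation orbit to `[0, δ)`. -/
lemma syndetic_lemma (α δ : ℝ) (hα : Irrational α) (hδ : 0 < δ) :
    ∃ K : ℕ, ∀ x : ℝ, ∃ k : ℕ, k ≤ K ∧ Int.fract (x - k * α) < δ := by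
  obtain ⟨n, hn⟩ := exists_nat_gt (1 / δ)
  have hn1 : 0 < n + 1 := Nat.succ_pos n
  obtain ⟨k₀, hk₀pos, hk₀le, hk₀⟩ := Real.exists_nat_abs_mul_sub_round_le α hn1
  set m : ℤ := round ((k₀ : ℝ) * α) with hmdef
  set β : ℝ := (k₀ : ℝ) * α - m with hβdef
  have hβirr : Irrational β := ((hα.natCast_mul hk₀pos.ne').sub_intCast m)
  have hβne : β ≠ 0 := hβirr.ne_zero
  have hβδ : |β| < δ := by
    have h1 : |β| ≤ 1 / ((n:ℝ) + 1 + 1) := by exact_mod_cast hk₀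
    have h2 : (1 : ℝ) / ((n:ℝ) + 1 + 1) < δ := by
      rw [div_lt_iff₀ (by positivity)]
      have hd : 1 / δ < (n:ℝ) + 1 + 1 := by linarith
      rw [div_lt_iff₀ hδ] at hd
      linarith
    linarith
  refine ⟨(⌈1 / |β|⌉ + 1).toNat * k₀, fun x => ?_⟩
  obtain ⟨j, hjle, hjfr⟩ := step_lemma β δ hβne hβδ x
  refine ⟨j * k₀, ?_, ?_⟩
  · have hj' : j ≤ (⌈1 / |β|⌉ + 1).toNat := by
      have h0 : (0:ℝ) < 1 / |β| := by positivity
      have : (j : ℝ) ≤ ((⌈1 / |β|⌉ + 1 : ℤ) : ℝ) := by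
        push_cast
        exact hjle.trans (by linarith [Int.le_ceil (1 / |β|)])
      have h2 : (j : ℤ) ≤ ⌈1 / |β|⌉ + 1 := by exact_mod_cast this
      omega
    exact Nat.mul_le_mul_right k₀ hj'
  · have : x - (j * k₀ : ℕ) * α = x - j * β - (j * m : ℤ) := by
      push_cast
      rw [hβdef]
      ring
    rw [this, Int.fract_sub_intCast]
    exact hjfr

/-- If `r, s ≥ 2` are multiplicatively independent and `A ⊆ ℕ₀` is infinite with
`Φ_s(A) ⊆ A`, then for every word `w` over `{0,…,r-1}` there is an element of `A` whose
base-`r` expansion begins with `w`. -/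
theorem stmt12 (r s : ℕ) (hr : 2 ≤ r) (hs : 2 ≤ s)
    (hind : Irrational (Real.log r / Real.log s))
    (A : Set ℕ) (hA : A.Infinite) (hPhi : ∀ n ∈ A, n / s ∈ A)
    (w : List ℕ) (hw : ∀ d ∈ w, d < r) :
    ∃ d n₀ : ℕ, n₀ < r ^ d ∧ wordVal r w * r ^ d + n₀ ∈ A := by
  set W : ℕ := wordVal r w with hWdef
  -- iterated division stays in A
  have hiter : ∀ (k : ℕ) (a : ℕ), a ∈ A → a / s ^ k ∈ A := by
    intro k
    induction k with
    | zero => intro a ha; simpa using ha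
    | succ k ih =>
      intro a ha
      have := hPhi _ (ih a ha)
      rwa [Nat.div_div_eq_div_mul, ← pow_succ] at this
  rcases Nat.eq_zero_or_pos W with hW0 | hWpos
  · -- trivial case W = 0
    obtain ⟨a, haA⟩ := hA.nonempty
    exact ⟨a, a, Nat.lt_pow_self (n := a) (by omega), by simpa [hW0] using haA⟩
  -- main case W ≥ 1
  have hrR : (1 : ℝ) < r := by exact_mod_cast hr.trans_lt' one_lt_two
  have hsR : (1 : ℝ) < s := by exact_mod_cast hs.trans_lt' one_lt_two
  have hlogr : 0 < Real.log r := Real.log_pos hrR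
  have hlogs : 0 < Real.log s := Real.log_pos hsR
  set α : ℝ := Real.log s / Real.log r with hαdef
  have hαirr : Irrational α := by
    have : α = (Real.log r / Real.log s)⁻¹ := by rw [hαdef, inv_div]
    rw [this]
    exact hind.inv
  have hWR : (1 : ℝ) ≤ (W : ℝ) := by exact_mod_cast hWpos
  set δ : ℝ := (Real.log (W + 1) - Real.log W) / Real.log r with hδdef
  have hδpos : 0 < δ := by
    apply div_pos _ hlogr
    have : Real.log W < Real.log (W + 1) := Real.log_lt_log (by linarith) (by linarith)
    linarith
  obtain ⟨K, hK⟩ := syndetic_lemma α δ hαirr hδpos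
  obtain ⟨a, haA, halarge⟩ := hA.exists_gt (W * s ^ K)
  have hapos : 0 < a := lt_of_le_of_lt (Nat.zero_le _) halarge
  have haR : (1 : ℝ) ≤ (a : ℝ) := by exact_mod_cast hapos
  set x : ℝ := (Real.log a - Real.log W) / Real.log r with hxdef
  obtain ⟨k, hkK, hkfr⟩ := hK x
  set z : ℝ := x - k * α with hzdef
  have hsk_le : (s : ℝ) ^ k ≤ (s : ℝ) ^ K := pow_le_pow_right₀ (by linarith) hkK
  have hage : (W : ℝ) * (s : ℝ) ^ k ≤ (a : ℝ) := by
    have h1 : (W * s ^ K : ℕ) < a := halarge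
    have h1R : (W : ℝ) * (s : ℝ) ^ K < (a : ℝ) := by exact_mod_cast h1
    nlinarith [hsk_le, hWR]
  have hzval : z = (Real.log a - Real.log W - k * Real.log s) / Real.log r := by
    rw [hzdef, hxdef, hαdef]; field_simp; try ring
  have hz0 : 0 ≤ z := by
    rw [hzval]
    apply div_nonneg _ hlogr.le
    have hlog : Real.log (W * s ^ k) ≤ Real.log a :=
      Real.log_le_log (by positivity) hage
    rw [Real.log_mul (by positivity) (by positivity), Real.log_pow] at hlog
    linarith
  set d : ℤ := ⌊z⌋ with hddef
  have hd0 : 0 ≤ d := Int.floor_nonneg.mpr hz0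
  set D : ℕ := d.toNat with hDdef
  have hDR : (D : ℝ) = (d : ℝ) := by exact_mod_cast Int.toNat_of_nonneg hd0
  have hfr : Int.fract z = z - d := rfl
  have hlow : (d : ℝ) ≤ z := Int.floor_le z
  have hhigh : z < (d : ℝ) + δ := by
    have : z - d < δ := by rw [← hfr]; exact hkfr
    linarith
  -- convert to log inequalities
  have hzlogr : z * Real.log r = Real.log a - Real.log W - k * Real.log s := by
    rw [hzval, div_mul_cancel₀ _ hlogr.ne']
  have hWpow_pos : (0:ℝ) < (W : ℝ) * (r:ℝ) ^ D * (s:ℝ) ^ k := by positivity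
  have hlogWpow : Real.log ((W : ℝ) * (r:ℝ) ^ D * (s:ℝ) ^ k)
      = Real.log W + D * Real.log r + k * Real.log s := by
    rw [Real.log_mul (by positivity) (by positivity),
      Real.log_mul (by positivity) (by positivity), Real.log_pow, Real.log_pow]
    all_goals { push_cast; ring }
  have hlogW1pow : Real.log (((W:ℝ) + 1) * (r:ℝ) ^ D * (s:ℝ) ^ k)
      = Real.log ((W:ℝ)+1) + D * Real.log r + k * Real.log s := by
    rw [Real.log_mul (by positivity) (by positivity),
      Real.log_mul (by positivity) (by positivity), Real.log_pow, Real.log_pow]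
    all_goals { push_cast; ring }
  have hle : (W : ℝ) * (r:ℝ) ^ D * (s:ℝ) ^ k ≤ (a : ℝ) := by
    rw [← Real.log_le_log_iff hWpow_pos (by linarith)]
    rw [hlogWpow]
    have h := mul_le_mul_of_nonneg_right hlow hlogr.le
    rw [hzlogr] at h
    rw [hDR]
    linarith
  have hlt : (a : ℝ) < ((W:ℝ) + 1) * (r:ℝ) ^ D * (s:ℝ) ^ k := by
    rw [← Real.log_lt_log_iff (by linarith) (by positivity)]
    rw [hlogW1pow]
    have h := mul_lt_mul_of_pos_right hhigh hlogr
    rw [hzlogr] at h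
    rw [hDR]
    have hδr : δ * Real.log r = Real.log ((W:ℝ)+1) - Real.log W := by
      rw [hδdef, div_mul_cancel₀ _ hlogr.ne']
    nlinarith [h, hδr]
  -- back to naturals
  have hleN : W * r ^ D * s ^ k ≤ a := by exact_mod_cast hle
  have hltN : a < (W + 1) * r ^ D * s ^ k := by exact_mod_cast hlt
  have hbA : a / s ^ k ∈ A := hiter k a haA
  set b : ℕ := a / s ^ k with hbdef
  have hskpos : 0 < s ^ k := Nat.pow_pos (by omega)
  have hb1 : W * r ^ D ≤ b := (Nat.le_div_iff_mul_le hskpos).mpr hleN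
  have hb2 : b < (W + 1) * r ^ D := (Nat.div_lt_iff_lt_mul hskpos).mpr hltN
  refine ⟨D, b - W * r ^ D, ?_, ?_⟩
  · have : (W + 1) * r ^ D = W * r ^ D + r ^ D := by ring
    omega
  · have : W * r ^ D + (b - W * r ^ D) = b := by omega
    rw [this]
    exact hbA
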